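/- For non-negative integers n, A, B with 0 ≤ A, B ≤ n, the double sum over j from 0 to n and l from 0 to n-j of (-1)^j · binomial(l+j, j) · binomial(n-l, j) · binomial(j, A-l) · binomial(j, B-n+l+j) equals (-1)^n if A = B, and 0 otherwise. -/

import Mathlib

/- Integer binomial coefficient: `chz a b = binomial(a,b)`, equal to `0` unless
`0 ≤ b ≤ a`. -/
def chz (a b : ℤ) : ℤ := if 0 ≤ b ∧ b ≤ a then (a.toNat.choose b.toNat : ℤ) else 0

open PowerSeries Finset
noncomputable section DSBI
namespace DSBI
variable {R : Type*} [CommRing R]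

def geomP (a : R) (j : ℕ) : PowerSeries R := PowerSeries.mk fun m => ((m + j).choose j : R) * a ^ m

lemma geomP_succ_mul (a : R) (j : ℕ) :
    geomP a (j + 1) * (1 - PowerSeries.C (R := R) a * X) = geomP a j := by
  ext n
  rw [mul_sub, mul_one, map_sub]
  cases n with
  | zero => simp [geomP, mul_comm, ← mul_assoc]
  | succ n =>
    have e : geomP a (j+1) * (PowerSeries.C (R := R) a * X) = (PowerSeries.C (R := R) a * geomP a (j+1)) * X := by
      ring
    rw [e, coeff_succ_mul_X, coeff_C_mul]
    simp only [geomP, coeff_mk]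
    have h : (n + 1 + (j + 1)).choose (j + 1) = (n + 1 + j).choose j + (n + (j+1)).choose (j+1) := by
      have := Nat.choose_succ_succ (n + 1 + j) j
      have e1 : n + 1 + (j + 1) = (n + 1 + j) + 1 := by omega
      have e2 : n + (j + 1) = n + 1 + j := by omega
      rw [e1, e2, this]
    rw [h]
    push_cast
    ring

lemma geomP_zero_mul (a : R) : geomP a 0 * (1 - PowerSeries.C (R := R) a * X) = 1 := by
  ext n
  rw [mul_sub, mul_one, map_sub]
  cases n with
  | zero => simp [geomP, mul_comm, ← mul_assoc]
  | succ n =>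
    have e : geomP a 0 * (PowerSeries.C (R := R) a * X) = (PowerSeries.C (R := R) a * geomP a 0) * X := by ring
    rw [e, coeff_succ_mul_X, coeff_C_mul]
    simp only [geomP, coeff_mk]
    simp [pow_succ, mul_comm]

def Dd (x y : R) : PowerSeries R := (1 - PowerSeries.C (R := R) x * X) * (1 - PowerSeries.C (R := R) y * X)
def uu (x y : R) : R := (1 + x) * (1 + y)
def trm (x y : R) (j : ℕ) : PowerSeries R :=
  (-1 : PowerSeries R) ^ j * (PowerSeries.C (R := R) (uu x y) * X) ^ j * (geomP x j * geomP y j)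
def Ee (x y : R) : PowerSeries R := geomP (-1 : R) 0 * geomP (-(x * y)) 0

variable (x y : R)

lemma Dinv_succ_mul (j : ℕ) :
    (geomP x (j+1) * geomP y (j+1)) * Dd x y = geomP x j * geomP y j := by
  unfold Dd
  calc (geomP x (j+1) * geomP y (j+1)) * ((1 - PowerSeries.C (R := R) x * X) * (1 - PowerSeries.C (R := R) y * X))
      = (geomP x (j+1) * (1 - PowerSeries.C (R := R) x * X)) * (geomP y (j+1) * (1 - PowerSeries.C (R := R) y * X)) := by ring
    _ = geomP x j * geomP y j := by rw [geomP_succ_mul, geomP_succ_mul]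

lemma Dinv_zero_mul : (geomP x 0 * geomP y 0) * Dd x y = 1 := by
  unfold Dd
  calc (geomP x 0 * geomP y 0) * ((1 - PowerSeries.C (R := R) x * X) * (1 - PowerSeries.C (R := R) y * X))
      = (geomP x 0 * (1 - PowerSeries.C (R := R) x * X)) * (geomP y 0 * (1 - PowerSeries.C (R := R) y * X)) := by ring
    _ = 1 := by rw [geomP_zero_mul, geomP_zero_mul, one_mul]

lemma tele (N : ℕ) :
    (∑ j ∈ range (N + 1), trm x y j) * (Dd x y + PowerSeries.C (R := R) (uu x y) * X) =
      1 + (-1 : PowerSeries R) ^ N * (PowerSeries.C (R := R) (uu x y) * X) ^ (N + 1) *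
        (geomP x N * geomP y N) := by
  induction N with
  | zero =>
    simp only [range_one, sum_singleton, trm, pow_zero, one_mul, zero_add, pow_one]
    rw [mul_add, Dinv_zero_mul]
    ring
  | succ N ih =>
    rw [sum_range_succ, add_mul, ih, mul_add]
    have h1 : trm x y (N+1) * Dd x y
        = (-1:PowerSeries R)^(N+1) * (PowerSeries.C (R := R) (uu x y) * X)^(N+1) *
            ((geomP x (N+1) * geomP y (N+1)) * Dd x y) := by
      unfold trm; ring
    rw [h1, Dinv_succ_mul]
    unfold trm
    ring

lemma factorD : Dd x y + PowerSeries.C (R := R) (uu x y) * X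
    = (1 + X) * (1 + PowerSeries.C (R := R) (x * y) * X) := by
  unfold Dd uu
  simp only [map_mul, map_add, map_one]
  ring

lemma Ee_inv : ((1 + X) * (1 + PowerSeries.C (R := R) (x * y) * X)) * Ee x y = 1 := by
  have h1 := geomP_zero_mul (-1 : R)
  have h2 := geomP_zero_mul (-(x * y))
  rw [map_neg, map_one] at h1
  rw [map_neg] at h2
  unfold Ee
  calc ((1 + X) * (1 + PowerSeries.C (R := R) (x * y) * X)) * (geomP (-1:R) 0 * geomP (-(x*y)) 0)
      = (geomP (-1:R) 0 * (1 - (-1) * X)) * (geomP (-(x*y)) 0 * (1 - -(PowerSeries.C (R := R) (x*y)) * X)) := by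
        ring
    _ = 1 := by rw [h1, h2, one_mul]

lemma Wn_eq (n : ℕ) : (∑ j ∈ range (n + 1), trm x y j) =
    Ee x y + ((-1 : PowerSeries R) ^ n * (PowerSeries.C (R := R) (uu x y) * X) ^ (n + 1) *
        (geomP x n * geomP y n)) * Ee x y := by
  have h := tele x y n
  rw [factorD] at h
  have h2 := congrArg (· * Ee x y) h
  rw [mul_assoc, Ee_inv, mul_one, add_mul, one_mul] at h2
  exact h2

lemma coeff_junk (n : ℕ) : (PowerSeries.coeff (R := R) n)
    (((-1 : PowerSeries R) ^ n * (PowerSeries.C (R := R) (uu x y) * X) ^ (n + 1) *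
        (geomP x n * geomP y n)) * Ee x y) = 0 := by
  have h : ((-1 : PowerSeries R) ^ n * (PowerSeries.C (R := R) (uu x y) * X) ^ (n + 1) *
        (geomP x n * geomP y n)) * Ee x y
      = X ^ (n+1) * ((-1 : PowerSeries R) ^ n * (PowerSeries.C (R := R) (uu x y)) ^ (n + 1) *
        (geomP x n * geomP y n) * Ee x y) := by ring
  rw [h, coeff_X_pow_mul', if_neg (by omega)]

lemma coeff_Ee (n : ℕ) : (PowerSeries.coeff (R := R) n) (Ee x y)
    = (-1 : R) ^ n * ∑ b ∈ range (n + 1), (x * y) ^ b := by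
  unfold Ee geomP
  rw [coeff_mul, Finset.Nat.sum_antidiagonal_eq_sum_range_succ_mk]
  simp only [coeff_mk, Nat.add_zero, Nat.choose_zero_right, Nat.cast_one, one_mul]
  rw [Finset.mul_sum, ← Finset.sum_range_reflect]
  apply Finset.sum_congr rfl
  intro b hb
  simp only [mem_range] at hb
  have h1 : n.succ - 1 - b = n - b := by omega
  have h2 : n - (n - b) = b := by omega
  rw [h1, h2]
  rw [neg_pow (x*y) b, ← mul_assoc, ← pow_add]
  congr 2
  omega

lemma coeff_geomP_mul (j m : ℕ) :
    (PowerSeries.coeff (R := R) m) (geomP x j * geomP y j)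
      = ∑ l ∈ range (m + 1),
          ((l + j).choose j : R) * ((m - l + j).choose j : R) * (x ^ l * y ^ (m - l)) := by
  unfold geomP
  rw [coeff_mul, Finset.Nat.sum_antidiagonal_eq_sum_range_succ_mk]
  apply Finset.sum_congr rfl
  intro l _
  simp only [coeff_mk]
  ring

lemma coeff_trm (n j : ℕ) (hj : j ≤ n) :
    (PowerSeries.coeff (R := R) n) (trm x y j)
      = (-1 : R) ^ j * (uu x y) ^ j *
          ∑ l ∈ range (n - j + 1),
            ((l + j).choose j : R) * ((n - j - l + j).choose j : R) * (x ^ l * y ^ (n - j - l)) := by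
  have h : trm x y j = PowerSeries.C (R := R) ((-1 : R) ^ j * (uu x y) ^ j) *
      (X ^ j * (geomP x j * geomP y j)) := by
    unfold trm
    simp only [map_mul, map_pow, map_neg, map_one]
    ring
  rw [h, coeff_C_mul, coeff_X_pow_mul', if_pos hj, coeff_geomP_mul]

theorem master (n : ℕ) :
    ∑ j ∈ range (n + 1), ∑ l ∈ range (n - j + 1),
      (-1 : R) ^ j * ((1 + x) * (1 + y)) ^ j *
        (((l + j).choose j : R) * ((n - l).choose j : R) * (x ^ l * y ^ (n - j - l)))
    = (-1 : R) ^ n * ∑ b ∈ range (n + 1), (x * y) ^ b := by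
  have h := congrArg (PowerSeries.coeff (R := R) n) (Wn_eq x y n)
  rw [map_add, coeff_junk, add_zero, coeff_Ee, map_sum] at h
  rw [← h]
  apply Finset.sum_congr rfl
  intro j hj
  rw [mem_range] at hj
  rw [coeff_trm x y n j (by omega), Finset.mul_sum]
  apply Finset.sum_congr rfl
  intro l hl
  rw [mem_range] at hl
  have e : n - j - l + j = n - l := by omega
  rw [e]
  unfold uu
  ring

end DSBI
end DSBI

open Polynomial in
noncomputable section
abbrev RR : Type := Polynomial (Polynomial ℤ)
noncomputable abbrev px : RR := Polynomial.C Polynomial.X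
noncomputable abbrev py : RR := Polynomial.X

lemma chz_ofNat (j : ℕ) (t : ℤ) :
    chz (j : ℤ) t = if 0 ≤ t then (j.choose t.toNat : ℤ) else 0 := by
  unfold chz
  by_cases h0 : 0 ≤ t
  · by_cases h1 : t ≤ (j : ℤ)
    · rw [if_pos ⟨h0, h1⟩, if_pos h0, Int.toNat_natCast]
    · rw [if_neg (by tauto), if_pos h0]
      have : j < t.toNat := by omega
      rw [Nat.choose_eq_zero_of_lt this, Nat.cast_zero]
  · rw [if_neg (by tauto), if_neg h0]

lemma chz_nat (a b : ℕ) (h : b ≤ a) : chz (a : ℤ) (b : ℤ) = (a.choose b : ℤ) := by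
  unfold chz
  rw [if_pos ⟨by positivity, by exact_mod_cast h⟩, Int.toNat_natCast, Int.toNat_natCast]

lemma coeff2_term (n A B j l : ℕ) (hj : j ≤ n) (hl : l ≤ n - j) :
    ((((-1 : RR) ^ j * ((1 + px) * (1 + py)) ^ j *
        (((l + j).choose j : RR) * ((n - l).choose j : RR) *
          (px ^ l * py ^ (n - j - l)))).coeff B).coeff A)
      = (-1 : ℤ) ^ j * ((l + j).choose j : ℤ) * ((n - l).choose j : ℤ) *
          (if l ≤ A then (j.choose (A - l) : ℤ) else 0) *
          (if n - j - l ≤ B then (j.choose (B - (n - j - l)) : ℤ) else 0) := by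
  set m := n - j - l with hm
  have hterm : (-1 : RR) ^ j * ((1 + px) * (1 + py)) ^ j *
        (((l + j).choose j : RR) * ((n - l).choose j : RR) * (px ^ l * py ^ (n - j - l)))
      = Polynomial.C ((-1 : Polynomial ℤ) ^ j * (1 + Polynomial.X) ^ j *
          (((l + j).choose j : Polynomial ℤ) * ((n - l).choose j : Polynomial ℤ) *
            Polynomial.X ^ l)) *
        ((1 + Polynomial.X) ^ j * Polynomial.X ^ m) := by
    simp only [mul_pow, map_mul, map_pow, map_neg, map_one, map_add, map_natCast]
    ring
  rw [hterm, Polynomial.coeff_C_mul, Polynomial.coeff_mul_X_pow']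
  by_cases hB : m ≤ B
  · rw [if_pos hB, if_pos hB, Polynomial.coeff_one_add_X_pow]
    have hq : (-1 : Polynomial ℤ) ^ j * (1 + Polynomial.X) ^ j *
          (((l + j).choose j : Polynomial ℤ) * ((n - l).choose j : Polynomial ℤ) *
            Polynomial.X ^ l) * ((j.choose (B - m) : ℕ) : Polynomial ℤ)
        = Polynomial.C ((-1 : ℤ) ^ j * ((l + j).choose j : ℤ) * ((n - l).choose j : ℤ) *
            (j.choose (B - m) : ℤ)) * ((1 + Polynomial.X) ^ j * Polynomial.X ^ l) := by
      simp only [map_mul, map_pow, map_neg, map_one, map_natCast, map_intCast]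
      push_cast
      ring
    rw [hq, Polynomial.coeff_C_mul, Polynomial.coeff_mul_X_pow']
    by_cases hA : l ≤ A
    · rw [if_pos hA, if_pos hA, Polynomial.coeff_one_add_X_pow]
      push_cast
      ring
    · rw [if_neg hA, if_neg hA]
      ring
  · rw [if_neg hB, if_neg hB]
    simp

lemma coeff2_rhs (n A B : ℕ) (hB : B ≤ n) :
    ((((-1 : RR) ^ n * ∑ b ∈ range (n + 1), (px * py) ^ b).coeff B).coeff A)
      = if A = B then (-1 : ℤ) ^ n else 0 := by
  have h1 : (-1 : RR) ^ n * ∑ b ∈ range (n + 1), (px * py) ^ b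
      = Polynomial.C ((-1 : Polynomial ℤ) ^ n) *
          ∑ b ∈ range (n + 1), Polynomial.C ((Polynomial.X : Polynomial ℤ) ^ b) * (Polynomial.X : RR) ^ b := by
    simp only [mul_pow, map_pow, map_neg, map_one]
  rw [h1, Polynomial.coeff_C_mul, Polynomial.finset_sum_coeff]
  have h2 : ∑ b ∈ range (n + 1), (Polynomial.C ((Polynomial.X : Polynomial ℤ) ^ b) * (Polynomial.X : RR) ^ b).coeff B
      = Polynomial.X ^ B := by
    rw [Finset.sum_eq_single B]
    · rw [Polynomial.coeff_C_mul, Polynomial.coeff_X_pow, if_pos rfl, mul_one]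
    · intro b _ hb
      rw [Polynomial.coeff_C_mul, Polynomial.coeff_X_pow, if_neg (by omega), mul_zero]
    · intro h
      exact absurd (Finset.mem_range.2 (by omega)) h
  rw [h2]
  have h3 : (-1 : Polynomial ℤ) ^ n * Polynomial.X ^ B
      = Polynomial.C ((-1 : ℤ) ^ n) * Polynomial.X ^ B := by
    simp only [map_pow, map_neg, map_one]
  rw [h3, Polynomial.coeff_C_mul, Polynomial.coeff_X_pow]
  by_cases h : A = B
  · rw [if_pos (by omega), if_pos h, mul_one]
  · rw [if_neg (by omega), if_neg h, mul_zero]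

theorem double_sum_binomial_identity (n A B : ℕ) (hA : A ≤ n) (hB : B ≤ n) :
    ∑ j ∈ Finset.range (n + 1), ∑ l ∈ Finset.range (n - j + 1),
      (-1 : ℤ) ^ j * chz ((l : ℤ) + j) j * chz ((n : ℤ) - l) j *
        chz (j : ℤ) ((A : ℤ) - l) * chz (j : ℤ) ((B : ℤ) - n + l + j) =
      if A = B then (-1 : ℤ) ^ n else 0 := by
  rw [← coeff2_rhs n A B hB, ← DSBI.master px py n]
  rw [Polynomial.finset_sum_coeff, Polynomial.finset_sum_coeff]
  apply Finset.sum_congr rfl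
  intro j hj
  rw [Finset.mem_range] at hj
  rw [Polynomial.finset_sum_coeff, Polynomial.finset_sum_coeff]
  apply Finset.sum_congr rfl
  intro l hl
  rw [Finset.mem_range] at hl
  rw [coeff2_term n A B j l (by omega) (by omega)]
  -- now convert chz values
  have e1 : (l : ℤ) + j = ((l + j : ℕ) : ℤ) := by push_cast; ring
  have e2 : (n : ℤ) - l = ((n - l : ℕ) : ℤ) := by
    have : l ≤ n := by omega
    omega
  rw [e1, e2, chz_nat (l + j) j (by omega), chz_nat (n - l) j (by omega),
    chz_ofNat, chz_ofNat]
  have e3 : (if 0 ≤ (A : ℤ) - l then (j.choose ((A : ℤ) - l).toNat : ℤ) else 0)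
      = if l ≤ A then (j.choose (A - l) : ℤ) else 0 := by
    by_cases h : l ≤ A
    · rw [if_pos (by omega), if_pos h]
      have : ((A : ℤ) - l).toNat = A - l := by omega
      rw [this]
    · rw [if_neg (by omega), if_neg h]
  have e4 : (if 0 ≤ (B : ℤ) - n + l + j then (j.choose ((B : ℤ) - n + l + j).toNat : ℤ) else 0)
      = if n - j - l ≤ B then (j.choose (B - (n - j - l)) : ℤ) else 0 := by
    by_cases h : n - j - l ≤ B
    · rw [if_pos (by omega), if_pos h]
      have : ((B : ℤ) - n + l + j).toNat = B - (n - j - l) := by omega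
      rw [this]
    · rw [if_neg (by omega), if_neg h]
  rw [e3, e4]

end
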